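/- For every x ∈ R/Z and every integer n ≥ 2, ζ̂(x,n) + (-1)^n ζ̂(-x,n) = -(2πi)^n/n! · B_n({x}), where B_n is the n-th Bernoulli polynomial and {x} the fractional part. -/
import Mathlib


set_option autoImplicit false

open Complex HurwitzZeta Real

lemma unitAddCircle_coe_fract (x : ℝ) :
    ((x : ℝ) : UnitAddCircle) = ((Int.fract x : ℝ) : UnitAddCircle) := by
  have h : ((⌊x⌋ : ℝ) : UnitAddCircle) = 0 := by
    rw [show ((⌊x⌋ : ℝ)) = ⌊x⌋ • (1 : ℝ) by simp, AddCircle.coe_zsmul, AddCircle.coe_period,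
      smul_zero]
  have : x = Int.fract x + (⌊x⌋ : ℝ) := by rw [Int.fract]; ring
  conv_lhs => rw [this]
  rw [AddCircle.coe_add, h, add_zero]

lemma I_pow_two_mul (k : ℕ) : (I : ℂ) ^ (2 * k) = (-1) ^ k := by
  rw [pow_mul, I_sq]

/-- For every `x ∈ ℝ/ℤ` and every integer `n ≥ 2`,
`ζ̂(x,n) + (-1)^n ζ̂(-x,n) = -(2πi)^n/n! · B_n({x})`. -/
theorem expZeta_add_neg_eq_bernoulli (x : ℝ) (n : ℕ) (hn : 2 ≤ n) :
    expZeta (x : UnitAddCircle) n + (-1 : ℂ) ^ n * expZeta ((-x : ℝ) : UnitAddCircle) n =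
      -(2 * π * I) ^ n / (n.factorial : ℂ) *
        Polynomial.aeval ((Int.fract x : ℝ) : ℂ) (Polynomial.bernoulli n) := by
  set y := Int.fract x with hy
  have hy01 : y ∈ Set.Icc (0 : ℝ) 1 := ⟨Int.fract_nonneg x, (Int.fract_lt_one x).le⟩
  have hx : ((x : ℝ) : UnitAddCircle) = ((y : ℝ) : UnitAddCircle) := unitAddCircle_coe_fract x
  have hnx : ((-x : ℝ) : UnitAddCircle) = -(((y : ℝ)) : UnitAddCircle) := by
    rw [AddCircle.coe_neg, hx]
  rw [hx, hnx, expZeta, expZeta, cosZeta_neg, sinZeta_neg]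
  have haeval : Polynomial.aeval ((y : ℝ) : ℂ) (Polynomial.bernoulli n) =
      ((Polynomial.bernoulli n).map (algebraMap ℚ ℂ)).eval ((y : ℝ) : ℂ) := by
    rw [Polynomial.aeval_def, Polynomial.eval₂_eq_eval_map]
  rw [haeval]
  rcases Nat.even_or_odd n with ⟨k, hk⟩ | ⟨k, hk⟩
  · have hk0 : k ≠ 0 := by omega
    have hn2k : n = 2 * k := by omega
    subst hn2k
    push_cast
    rw [cosZeta_two_mul_nat hk0 hy01]
    have h1 : ((-1 : ℂ)) ^ (2 * k) = 1 := by
      rw [pow_mul]; norm_num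
    have h2 : (2 * (π : ℂ) * I) ^ (2 * k) = (-1) ^ k * (2 * π) ^ (2 * k) := by
      rw [mul_pow, I_pow_two_mul]; ring
    rw [h1, h2]
    ring
  · have hk0 : k ≠ 0 := by omega
    have hn2k : n = 2 * k + 1 := by omega
    subst hn2k
    push_cast
    rw [sinZeta_two_mul_nat_add_one hk0 hy01]
    have h1 : ((-1 : ℂ)) ^ (2 * k + 1) = -1 := by
      rw [pow_succ, pow_mul]; norm_num
    have h2 : (2 * (π : ℂ) * I) ^ (2 * k + 1) = (-1) ^ k * (2 * π) ^ (2 * k + 1) * I := by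
      rw [mul_pow, pow_succ I, I_pow_two_mul]; ring
    rw [h1, h2]
    ring
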